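/- For every integer n, BP(n)·(BP(n))*_j + BP(n−1)·(BP(n−1))*_j = 12·(−P(2n+2)·1 + P(2n+2)·i). -/

import Mathlib

open scoped TensorProduct

noncomputable def bi : ℂ ⊗[ℝ] ℂ := Complex.I ⊗ₜ[ℝ] 1
noncomputable def bj : ℂ ⊗[ℝ] ℂ := (1 : ℂ) ⊗ₜ[ℝ] Complex.I
noncomputable def bij : ℂ ⊗[ℝ] ℂ := Complex.I ⊗ₜ[ℝ] Complex.I

/-- The bicomplex Pell number `BP n = P n + P (n+1) i + P (n+2) j + P (n+3) ij`. -/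
noncomputable def BP (P : ℤ → ℤ) (n : ℤ) : ℂ ⊗[ℝ] ℂ :=
  (P n : ℝ) • (1 : ℂ ⊗[ℝ] ℂ) + (P (n + 1) : ℝ) • bi + (P (n + 2) : ℝ) • bj +
    (P (n + 3) : ℝ) • bij

/-- The j-conjugate of the bicomplex Pell number. -/
noncomputable def BPconjJ (P : ℤ → ℤ) (n : ℤ) : ℂ ⊗[ℝ] ℂ :=
  (P n : ℝ) • (1 : ℂ ⊗[ℝ] ℂ) + (P (n + 1) : ℝ) • bi - (P (n + 2) : ℝ) • bj -
    (P (n + 3) : ℝ) • bij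

lemma tmul_simp : True := trivial

lemma hii : bi * bi = -1 := by
  simp [bi, Algebra.TensorProduct.tmul_mul_tmul, Complex.I_mul_I,
    Algebra.TensorProduct.one_def, TensorProduct.neg_tmul]

lemma hjj : bj * bj = -1 := by
  simp [bj, Algebra.TensorProduct.tmul_mul_tmul, Complex.I_mul_I,
    Algebra.TensorProduct.one_def, TensorProduct.tmul_neg]

lemma hijij : bij * bij = 1 := by
  simp [bij, Algebra.TensorProduct.tmul_mul_tmul, Complex.I_mul_I,
    Algebra.TensorProduct.one_def, TensorProduct.neg_tmul, TensorProduct.tmul_neg]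

lemma hibj : bi * bj = bij := by
  simp [bi, bj, bij, Algebra.TensorProduct.tmul_mul_tmul]

lemma hjbi : bj * bi = bij := by
  simp [bi, bj, bij, Algebra.TensorProduct.tmul_mul_tmul]

lemma hibij : bi * bij = -bj := by
  simp [bi, bj, bij, Algebra.TensorProduct.tmul_mul_tmul, Complex.I_mul_I,
    TensorProduct.neg_tmul]

lemma hbiji : bij * bi = -bj := by
  simp [bi, bj, bij, Algebra.TensorProduct.tmul_mul_tmul, Complex.I_mul_I,
    TensorProduct.neg_tmul]

lemma hjbij : bj * bij = -bi := by
  simp [bi, bj, bij, Algebra.TensorProduct.tmul_mul_tmul, Complex.I_mul_I,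
    TensorProduct.tmul_neg]

lemma hbijj : bij * bj = -bi := by
  simp [bi, bj, bij, Algebra.TensorProduct.tmul_mul_tmul, Complex.I_mul_I,
    TensorProduct.tmul_neg]

lemma mul_conj (a b c d : ℝ) :
    (a • (1 : ℂ ⊗[ℝ] ℂ) + b • bi + c • bj + d • bij) *
      (a • (1 : ℂ ⊗[ℝ] ℂ) + b • bi - c • bj - d • bij) =
    (a^2 - b^2 + c^2 - d^2) • (1 : ℂ ⊗[ℝ] ℂ) + (2*(a*b + c*d)) • bi := by
  simp only [add_mul, mul_add, sub_mul, mul_sub, smul_mul_smul_comm, mul_one, one_mul,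
    hii, hjj, hijij, hibj, hjbi, hibij, hbiji, hjbij, hbijj, smul_neg]
  module

lemma key (P : ℤ → ℤ)
    (hP : ∀ n : ℤ, P (n + 2) = 2 * P (n + 1) + P n) (hP0 : P 0 = 0) (hP1 : P 1 = 1)
    (n : ℤ) :
    P (2*n+1) = P (n+1)^2 + P n^2 ∧ P (2*n+2) = P (n+2)*(P (n+1)) + P (n+1)*(P n) := by
  induction n using Int.induction_on with
  | zero =>
    have h2 : P 2 = 2 := by have := hP 0; norm_num at this; omega
    norm_num [hP0, hP1, h2]
  | succ i ih =>
    obtain ⟨ih1, ih2⟩ := ih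
    have e1 : P (2*(i:ℤ)+3) = 2 * P (2*i+2) + P (2*i+1) := by
      have := hP (2*i+1)
      rw [show (2*(i:ℤ)+1+2) = 2*i+3 by ring, show (2*(i:ℤ)+1+1) = 2*i+2 by ring] at this
      exact this
    have e2 : P (2*(i:ℤ)+4) = 2 * P (2*i+3) + P (2*i+2) := by
      have := hP (2*i+2)
      rw [show (2*(i:ℤ)+2+2) = 2*i+4 by ring, show (2*(i:ℤ)+2+1) = 2*i+3 by ring] at this
      exact this
    have e3 : P ((i:ℤ)+2) = 2 * P (i+1) + P i := hP i
    have e4 : P ((i:ℤ)+3) = 2 * P (i+2) + P (i+1) := by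
      have := hP (i+1)
      rw [show ((i:ℤ)+1+2) = i+3 by ring, show ((i:ℤ)+1+1) = i+2 by ring] at this
      exact this
    constructor
    · rw [show (2*((i:ℤ)+1)+1) = 2*i+3 by ring, show ((i:ℤ)+1+1) = i+2 by ring,
        e1, ih1, ih2, e3]; ring
    · rw [show (2*((i:ℤ)+1)+2) = 2*i+4 by ring, show ((i:ℤ)+1+2) = i+3 by ring,
        show ((i:ℤ)+1+1) = i+2 by ring, e2, e1, ih1, ih2, e4, e3]; ring
  | pred i ih =>
    obtain ⟨ih1, ih2⟩ := ih
    have e1 : P (-2*(i:ℤ)+1) = 2 * P (-2*i) + P (-2*i-1) := by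
      have := hP (-2*i-1)
      rw [show (-2*(i:ℤ)-1+2) = -2*i+1 by ring, show (-2*(i:ℤ)-1+1) = -2*i by ring] at this
      exact this
    have e2 : P (-2*(i:ℤ)+2) = 2 * P (-2*i+1) + P (-2*i) := by
      have := hP (-2*i)
      rw [show (-2*(i:ℤ)+2) = -2*i+2 by ring, show (-2*(i:ℤ)+1) = -2*i+1 by ring] at this
      exact this
    have e3 : P (-(i:ℤ)+1) = 2 * P (-i) + P (-i-1) := by
      have := hP (-i-1)
      rw [show (-(i:ℤ)-1+2) = -i+1 by ring, show (-(i:ℤ)-1+1) = -i by ring] at this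
      exact this
    have e4 : P (-(i:ℤ)+2) = 2 * P (-i+1) + P (-i) := by
      have := hP (-i)
      rw [show (-(i:ℤ)+2) = -i+2 by ring, show (-(i:ℤ)+1) = -i+1 by ring] at this
      exact this
    rw [show (2*(-(i:ℤ))+1) = -2*i+1 by ring] at ih1
    rw [show (2*(-(i:ℤ))+2) = -2*i+2 by ring] at ih2
    constructor
    · rw [show (2*(-(i:ℤ)-1)+1) = -2*i-1 by ring, show (-(i:ℤ)-1+1) = -i by ring]
      linear_combination (-1:ℤ)*e1 + 2*e2 + 5*ih1 - 2*ih2 - 2*(P (-(i:ℤ)+1))*e4 +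
        (P (-(i:ℤ)+1) - 2*P (-(i:ℤ)) + P (-(i:ℤ)-1))*e3
    · rw [show (2*(-(i:ℤ)-1)+2) = -2*i by ring, show (-(i:ℤ)-1+2) = -i+1 by ring,
        show (-(i:ℤ)-1+1) = -i by ring]
      linear_combination ih2 - 2*ih1 - e2 + (P (-(i:ℤ)+1))*e4 + (P (-(i:ℤ)))*e3

theorem bicomplexPell_mul_conjJ_add (P : ℤ → ℤ)
    (hP : ∀ n : ℤ, P (n + 2) = 2 * P (n + 1) + P n) (hP0 : P 0 = 0) (hP1 : P 1 = 1)
    (n : ℤ) :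
    BP P n * BPconjJ P n + BP P (n - 1) * BPconjJ P (n - 1) =
      (12 : ℝ) • ((-(P (2 * n + 2)) : ℝ) • (1 : ℂ ⊗[ℝ] ℂ) +
        (P (2 * n + 2) : ℝ) • bi) := by
  have hkey := (key P hP hP0 hP1 n).2
  have h1 : P (n+1) = 2 * P n + P (n-1) := by
    have := hP (n-1)
    rw [show (n-1+2) = n+1 by ring, show (n-1+1) = n by ring] at this
    exact this
  have h2 : P (n+2) = 2 * P (n+1) + P n := hP n
  have h3 : P (n+3) = 2 * P (n+2) + P (n+1) := by
    have := hP (n+1)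
    rw [show (n+1+2) = n+3 by ring, show (n+1+1) = n+2 by ring] at this
    exact this
  -- integer identities
  have idA : (P n)^2 - P (n+1)^2 + P (n+2)^2 - P (n+3)^2 +
      (P (n-1)^2 - (P n)^2 + P (n+1)^2 - P (n+2)^2) = -12 * P (2*n+2) := by
    rw [hkey, h3, h2, h1]; ring
  have idB : 2*(P n * P (n+1) + P (n+2) * P (n+3)) +
      2*(P (n-1) * P n + P (n+1) * P (n+2)) = 12 * P (2*n+2) := by
    rw [hkey, h3, h2, h1]; ring
  have eA : BP P n * BPconjJ P n =
      ((P n : ℝ)^2 - (P (n+1):ℝ)^2 + (P (n+2):ℝ)^2 - (P (n+3):ℝ)^2) • (1 : ℂ ⊗[ℝ] ℂ) +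
        (2*((P n:ℝ)*(P (n+1):ℝ) + (P (n+2):ℝ)*(P (n+3):ℝ))) • bi := by
    unfold BP BPconjJ; exact mul_conj _ _ _ _
  have eB : BP P (n-1) * BPconjJ P (n-1) =
      ((P (n-1) : ℝ)^2 - (P n:ℝ)^2 + (P (n+1):ℝ)^2 - (P (n+2):ℝ)^2) • (1 : ℂ ⊗[ℝ] ℂ) +
        (2*((P (n-1):ℝ)*(P n:ℝ) + (P (n+1):ℝ)*(P (n+2):ℝ))) • bi := by
    unfold BP BPconjJ
    rw [show (n-1+1) = n by ring, show (n-1+2) = n+1 by ring,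
      show (n-1+3) = n+2 by ring]
    exact mul_conj _ _ _ _
  rw [eA, eB]
  have idA' : ((P n : ℝ))^2 - (P (n+1):ℝ)^2 + (P (n+2):ℝ)^2 - (P (n+3):ℝ)^2 +
      ((P (n-1):ℝ)^2 - (P n:ℝ)^2 + (P (n+1):ℝ)^2 - (P (n+2):ℝ)^2) =
      -12 * (P (2*n+2) : ℝ) := by exact_mod_cast congrArg (Int.cast : ℤ → ℝ) idA
  have idB' : 2*((P n:ℝ) * (P (n+1):ℝ) + (P (n+2):ℝ) * (P (n+3):ℝ)) +
      2*((P (n-1):ℝ) * (P n:ℝ) + (P (n+1):ℝ) * (P (n+2):ℝ)) =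
      12 * (P (2*n+2) : ℝ) := by exact_mod_cast congrArg (Int.cast : ℤ → ℝ) idB
  match_scalars
  · linarith [idA']
  · linarith [idB']
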